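/- Let $\hat\theta_1,\dots,\hat\theta_K$ be real-valued random variables (estimators of a real number $\theta$) such that $\mathbb{P}(|\hat\theta_k - \theta| \le w) \ge 1-\alpha$ for each $k$, for some constant $w > 0$. Then the sample median $\hat\theta_{(\lceil K/2 \rceil)}$ of $\hat\theta_1,\dots,\hat\theta_K$ satisfies $\mathbb{P}(|\hat\theta_{(\lceil K/2 \rceil)} - \theta| \le w) \ge 1-2\alpha$. -/

import Mathlib

open MeasureTheory

/-- The `⌈K/2⌉`-th smallest value (1-indexed) among `c 0, …, c (K-1)`. -/
noncomputable def medianOf {K : ℕ} (c : Fin K → ℝ) : ℝ :=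
  (Multiset.sort (Multiset.ofList (List.ofFn c)) (· ≤ ·)).getD ((K + 1) / 2 - 1) 0

lemma count_eq {K : ℕ} (c : Fin K → ℝ) (p : ℝ → Prop) [DecidablePred p] :
    ((Multiset.sort (Multiset.ofList (List.ofFn c)) (· ≤ ·)).countP (fun x => decide (p x)))
      = (Finset.univ.filter (fun k => p (c k))).card := by
  have h1 : Multiset.countP p ↑(Multiset.sort (Multiset.ofList (List.ofFn c)) (· ≤ ·))
      = Multiset.countP p (Multiset.ofList (List.ofFn c)) := by
    rw [Multiset.sort_eq]
  rw [Multiset.coe_countP] at h1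
  rw [h1]
  have h2 : (Multiset.ofList (List.ofFn c)) = Multiset.map c (Finset.univ : Finset (Fin K)).val := by
    rw [List.ofFn_eq_map, Fin.univ_def]
    rfl
  rw [h2, Multiset.countP_map]
  rfl


lemma medianOf_key {K : ℕ} (hK : 1 ≤ K) (c : Fin K → ℝ) {θ w : ℝ}
    (h : w < |medianOf c - θ|) :
    K ≤ 2 * (Finset.univ.filter (fun k => w < |c k - θ|)).card := by
  classical
  set l := Multiset.sort (Multiset.ofList (List.ofFn c)) (· ≤ ·) with hl
  have hlen : l.length = K := by
    rw [hl, Multiset.length_sort]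
    simp
  have hsorted : List.Pairwise (· ≤ ·) l := Multiset.pairwise_sort ..
  have mono : ∀ (i j : Fin l.length), i ≤ j → l.get i ≤ l.get j := by
    intro i j hij
    rcases lt_or_eq_of_le hij with h' | h'
    · exact List.Pairwise.rel_get_of_lt hsorted h'
    · exact le_of_eq (congrArg l.get h')
  set i0 := (K + 1) / 2 - 1 with hi0def
  have hi0 : i0 < K := by omega
  have hi0' : i0 < l.length := by omega
  have hmed : medianOf c = l.get ⟨i0, hi0'⟩ := by
    rw [medianOf, ← hl, List.getD_eq_getElem _ _ hi0']
    rfl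
  -- generic bound: card filter abs ≥ card filter one-sided
  rcases lt_abs.mp h with hc | hc
  · -- median - θ > w : drop i0 all > θ + w
    have hall : ∀ x ∈ l.drop i0, w < x - θ := by
      intro x hx
      obtain ⟨j, hj, rfl⟩ := List.mem_iff_getElem.mp hx
      rw [List.getElem_drop]
      have hj' : i0 + j < l.length := by
        rw [List.length_drop] at hj; omega
      have := mono ⟨i0, hi0'⟩ ⟨i0 + j, hj'⟩ (by simp)
      simp only [List.get_eq_getElem] at this
      rw [hmed] at hc
      simp only [List.get_eq_getElem] at hc
      linarith
    have hcount : K - i0 ≤ l.countP (fun x => decide (w < x - θ)) := by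
      have : l.countP (fun x => decide (w < x - θ))
          = (l.take i0).countP (fun x => decide (w < x - θ))
            + (l.drop i0).countP (fun x => decide (w < x - θ)) := by
        conv_lhs => rw [← List.take_append_drop i0 l]
        rw [List.countP_append]
      rw [this]
      have hd : (l.drop i0).countP (fun x => decide (w < x - θ)) = (l.drop i0).length :=
        List.countP_eq_length.mpr (fun a ha => by simpa using hall a ha)
      rw [hd, List.length_drop, hlen]
      omega
    have := count_eq c (fun x => w < x - θ)
    rw [this] at hcount
    have hsub : (Finset.univ.filter (fun k => w < c k - θ)).card
        ≤ (Finset.univ.filter (fun k => w < |c k - θ|)).card := by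
      apply Finset.card_le_card
      intro k hk
      simp only [Finset.mem_filter] at *
      exact ⟨hk.1, lt_of_lt_of_le hk.2 (le_abs_self _)⟩
    omega
  · -- θ - median > w : take (i0+1) all < θ - w
    have hall : ∀ x ∈ l.take (i0 + 1), w < θ - x := by
      intro x hx
      obtain ⟨j, hj, rfl⟩ := List.mem_iff_getElem.mp hx
      have hj2 : j < l.length := by
        have := List.length_take_le (i0+1) l; omega
      rw [List.getElem_take]
      have hjle : j ≤ i0 := by
        rw [List.length_take] at hj; omega
      have := mono ⟨j, hj2⟩ ⟨i0, hi0'⟩ (by simpa using hjle)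
      simp only [List.get_eq_getElem] at this
      rw [hmed] at hc
      simp only [List.get_eq_getElem] at hc
      linarith
    have hcount : i0 + 1 ≤ l.countP (fun x => decide (w < θ - x)) := by
      have : l.countP (fun x => decide (w < θ - x))
          = (l.take (i0+1)).countP (fun x => decide (w < θ - x))
            + (l.drop (i0+1)).countP (fun x => decide (w < θ - x)) := by
        conv_lhs => rw [← List.take_append_drop (i0+1) l]
        rw [List.countP_append]
      rw [this]
      have hd : (l.take (i0+1)).countP (fun x => decide (w < θ - x)) = (l.take (i0+1)).length :=
        List.countP_eq_length.mpr (fun a ha => by simpa using hall a ha)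
      rw [hd, List.length_take, hlen]
      omega
    have := count_eq c (fun x => w < θ - x)
    rw [this] at hcount
    have hsub : (Finset.univ.filter (fun k => w < θ - c k)).card
        ≤ (Finset.univ.filter (fun k => w < |c k - θ|)).card := by
      apply Finset.card_le_card
      intro k hk
      simp only [Finset.mem_filter] at *
      refine ⟨hk.1, ?_⟩
      have : w < -(c k - θ) := by linarith [hk.2]
      exact lt_of_lt_of_le this (neg_le_abs _)
    omega

/-- Derandomization of point estimators: if each of `K` (arbitrarily dependent)
estimators is within `w` of `θ` with probability at least `1-α`, then their sample
median is within `w` of `θ` with probability at least `1-2α`. -/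
theorem median_estimator_concentration {Ω : Type*} [MeasurableSpace Ω]
    (μ : Measure Ω) [IsProbabilityMeasure μ]
    (K : ℕ) (hK : 2 ≤ K) (α : ℝ) (hα0 : 0 ≤ α) (hα1 : α ≤ 1)
    (θ : ℝ) (w : ℝ) (hw : 0 < w)
    (θhat : Fin K → Ω → ℝ)
    (hmeas : ∀ k, Measurable (θhat k))
    (hcov : ∀ k, ENNReal.ofReal (1 - α) ≤ μ {ω | |θhat k ω - θ| ≤ w}) :
    ENNReal.ofReal (1 - 2 * α) ≤
      μ {ω | |medianOf (fun k => θhat k ω) - θ| ≤ w} := by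
  classical
  set B : Fin K → Set Ω := fun k => {ω | w < |θhat k ω - θ|} with hBdef
  have habs : ∀ k, Measurable fun ω => |θhat k ω - θ| :=
    fun k => ((hmeas k).sub measurable_const).abs
  have hBmeas : ∀ k, MeasurableSet (B k) :=
    fun k => measurableSet_lt measurable_const (habs k)
  have hGmeas : ∀ k, MeasurableSet {ω | |θhat k ω - θ| ≤ w} :=
    fun k => measurableSet_le (habs k) measurable_const
  have hB : ∀ k, μ (B k) ≤ ENNReal.ofReal α := by
    intro k
    have hcompl : B k = {ω | |θhat k ω - θ| ≤ w}ᶜ := by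
      ext ω; simp [hBdef, not_le]
    rw [hcompl, prob_compl_eq_one_sub (hGmeas k)]
    calc 1 - μ {ω | |θhat k ω - θ| ≤ w} ≤ 1 - ENNReal.ofReal (1 - α) :=
          tsub_le_tsub_left (hcov k) 1
      _ = ENNReal.ofReal α := by
          rw [← ENNReal.ofReal_one, ← ENNReal.ofReal_sub _ (by linarith : (0:ℝ) ≤ 1 - α)]
          norm_num
  set N : Ω → ℕ := fun ω => (Finset.univ.filter (fun k => w < |θhat k ω - θ|)).card with hNdef
  set A : Set Ω := {ω | K ≤ 2 * N ω} with hAdef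
  have hNval : ∀ ω, (∑ k, (B k).indicator (1 : Ω → ENNReal) ω) = (N ω : ENNReal) := by
    intro ω
    rw [hNdef]
    simp only [Finset.card_filter]
    push_cast
    apply Finset.sum_congr rfl
    intro k _
    by_cases hk : w < |θhat k ω - θ| <;> simp [Set.indicator, hBdef, hk]
  have hNmeas : Measurable N := by
    have h1 : Measurable fun ω => ∑ k : Fin K, if w < |θhat k ω - θ| then 1 else 0 := by
      apply Finset.measurable_sum
      intro k _
      exact Measurable.ite (hBmeas k) measurable_const measurable_const
    have h2 : N = fun ω => ∑ k : Fin K, if w < |θhat k ω - θ| then 1 else 0 := by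
      funext ω; rw [hNdef]; exact Finset.card_filter _ _
    rw [h2]; exact h1
  have hAmeas : MeasurableSet A := by
    have hA' : A = N ⁻¹' {n | K ≤ 2 * n} := rfl
    rw [hA']; exact hNmeas (by trivial)
  -- Markov step
  have hKA : (K : ENNReal) * μ A ≤ 2 * ∑ k, μ (B k) := by
    have hpt : ∀ ω, A.indicator (fun _ => (K : ENNReal)) ω
        ≤ 2 * ∑ k, (B k).indicator (1 : Ω → ENNReal) ω := by
      intro ω
      by_cases hω : ω ∈ A
      · rw [Set.indicator_of_mem hω, hNval ω]
        have hKN : K ≤ 2 * N ω := hω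
        calc (K : ENNReal) ≤ ((2 * N ω : ℕ) : ENNReal) := by exact_mod_cast hKN
          _ = 2 * (N ω : ENNReal) := by push_cast; ring
      · rw [Set.indicator_of_notMem hω]; exact zero_le
    calc (K : ENNReal) * μ A = ∫⁻ ω, A.indicator (fun _ => (K : ENNReal)) ω ∂μ := by
          rw [lintegral_indicator hAmeas, setLIntegral_const]
      _ ≤ ∫⁻ ω, 2 * ∑ k, (B k).indicator (1 : Ω → ENNReal) ω ∂μ := lintegral_mono hpt
      _ = 2 * ∫⁻ ω, ∑ k, (B k).indicator (1 : Ω → ENNReal) ω ∂μ := by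
          apply lintegral_const_mul
          apply Finset.measurable_sum
          intro k _
          exact (measurable_const.indicator (hBmeas k))
      _ = 2 * ∑ k, μ (B k) := by
          congr 1
          rw [lintegral_finset_sum (f := fun k => (B k).indicator (1 : Ω → ENNReal))
            Finset.univ (fun k _ => measurable_const.indicator (hBmeas k))]
          exact Finset.sum_congr rfl fun k _ => lintegral_indicator_one (hBmeas k)
  have hμA : μ A ≤ ENNReal.ofReal (2 * α) := by
    have hsum : ∑ k, μ (B k) ≤ K * ENNReal.ofReal α := by
      calc ∑ k, μ (B k) ≤ (Finset.univ : Finset (Fin K)).card • ENNReal.ofReal α :=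
            Finset.sum_le_card_nsmul _ _ _ (fun k _ => hB k)
        _ = K * ENNReal.ofReal α := by simp [nsmul_eq_mul]
    have h2 : (K : ENNReal) * μ A ≤ (K : ENNReal) * ENNReal.ofReal (2 * α) := by
      calc (K : ENNReal) * μ A ≤ 2 * (K * ENNReal.ofReal α) :=
            le_trans hKA (by exact mul_le_mul_right hsum 2)
        _ = (K : ENNReal) * ENNReal.ofReal (2 * α) := by
            rw [ENNReal.ofReal_mul (by norm_num : (0:ℝ) ≤ 2)]
            ring_nf
            congr 1
            norm_num
    exact (ENNReal.mul_le_mul_iff_right (by exact_mod_cast (by omega : K ≠ 0)) (by simp)).mp h2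
  -- complement inclusion
  have hsub : Aᶜ ⊆ {ω | |medianOf (fun k => θhat k ω) - θ| ≤ w} := by
    intro ω hω
    by_contra hcon
    apply hω
    have : w < |medianOf (fun k => θhat k ω) - θ| := not_le.mp hcon
    exact medianOf_key (by omega) _ this
  have hone : (1 : ENNReal) ≤ μ A + μ Aᶜ := by
    have := measure_union_le (μ := μ) A Aᶜ
    rw [Set.union_compl_self, measure_univ] at this
    exact this
  calc ENNReal.ofReal (1 - 2 * α) ≤ μ Aᶜ := by
        by_cases hcase : 2 * α ≤ 1
        · have key : ENNReal.ofReal (1 - 2 * α) + ENNReal.ofReal (2 * α)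
              ≤ μ Aᶜ + ENNReal.ofReal (2 * α) := by
            calc ENNReal.ofReal (1 - 2 * α) + ENNReal.ofReal (2 * α)
                = ENNReal.ofReal 1 := by
                  rw [← ENNReal.ofReal_add (by linarith) (by linarith)]; norm_num
              _ = 1 := ENNReal.ofReal_one
              _ ≤ μ A + μ Aᶜ := hone
              _ ≤ ENNReal.ofReal (2 * α) + μ Aᶜ := add_le_add_left hμA _
              _ = μ Aᶜ + ENNReal.ofReal (2 * α) := add_comm _ _
          exact (ENNReal.add_le_add_iff_right ENNReal.ofReal_ne_top).mp key
        · have : ENNReal.ofReal (1 - 2 * α) = 0 := by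
            rw [ENNReal.ofReal_eq_zero]; linarith [not_le.mp hcase]
          rw [this]; exact zero_le
    _ ≤ μ {ω | |medianOf (fun k => θhat k ω) - θ| ≤ w} := measure_mono hsub
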